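/- Let s ≥ 1 be an integer, (α_1,…,α_s) ∈ (0,1)^s, and let ε : ℕ → ℝ_{≥0} be a function tending to 0. Then there exists a function ε' : ℕ → ℝ_{≥0} tending to 0 (depending only on ε, s and the α_i) such that for all integers n ≥ 1, ∑ ε(u_1)·∏_{i=1}^s u_i^{−α_i} ≤ ε'(n)·n^{s−1−∑_i α_i}, where the sum runs over all s-tuples of integers (u_1,…,u_s) with 1 ≤ u_i ≤ n for all i and u_1 + ⋯ + u_s = n. -/

import Mathlib

open Filter Topology Finset


lemma sum_rpow_le (γ : ℝ) (hγ : -1 < γ) :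
    ∃ C > 0, ∀ n : ℕ, 1 ≤ n → ∑ u ∈ Finset.Icc 1 n, (u:ℝ)^γ ≤ C * (n:ℝ)^(γ+1) := by
  rcases le_or_gt 0 γ with h0 | h0
  · refine ⟨1, one_pos, fun n hn => ?_⟩
    have hnpos : (0:ℝ) < n := by exact_mod_cast hn
    calc ∑ u ∈ Finset.Icc 1 n, (u:ℝ)^γ ≤ ∑ u ∈ Finset.Icc 1 n, (n:ℝ)^γ := by
          refine Finset.sum_le_sum fun u hu => ?_
          have := (Finset.mem_Icc.mp hu).2
          exact Real.rpow_le_rpow (by positivity) (by exact_mod_cast this) h0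
      _ = n * (n:ℝ)^γ := by
          rw [Finset.sum_const, Nat.card_Icc]; simp
      _ = 1 * (n:ℝ)^(γ+1) := by
          rw [one_mul, Real.rpow_add hnpos, Real.rpow_one]; ring
  · have hγ1 : (0:ℝ) < γ + 1 := by linarith
    refine ⟨1 + 1/(γ+1), by positivity, fun n hn => ?_⟩
    have hnpos : (0:ℝ) < n := by exact_mod_cast hn
    have hn1 : (1:ℝ) ≤ (n:ℝ)^(γ+1) := Real.one_le_rpow (by exact_mod_cast hn) hγ1.le
    have key : ∑ u ∈ Finset.Ico 1 n, ((u:ℝ)+1)^γ ≤ ∫ x in (1:ℕ)..(n:ℕ), x^γ := by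
      have hmono : AntitoneOn (fun x : ℝ => x^γ) (Set.Icc ((1:ℕ):ℝ) ((n:ℕ):ℝ)) := by
        intro x hx y hy hxy
        have hx1 : (1:ℝ) ≤ x := by exact_mod_cast hx.1
        exact Real.rpow_le_rpow_of_nonpos (by linarith) hxy h0.le
      have := AntitoneOn.sum_le_integral_Ico hn hmono
      simpa using this
    have hint : ∫ x in (1:ℕ)..(n:ℕ), x^γ = ((n:ℝ)^(γ+1) - 1^(γ+1))/(γ+1) := by
      rw [integral_rpow (Or.inl hγ)]; norm_num
    have hdecomp : ∑ u ∈ Finset.Icc 1 n, (u:ℝ)^γ = 1 + ∑ u ∈ Finset.Ico 1 n, ((u:ℝ)+1)^γ := by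
      have h1 : ∑ u ∈ Finset.Ico 1 n, ((u:ℝ)+1)^γ = ∑ u ∈ Finset.Icc 2 n, (u:ℝ)^γ := by
        rw [show Finset.Icc 2 n = (Finset.Ico 1 n).image (· + 1) by
          ext x; simp [Finset.mem_Ico, Finset.mem_Icc]]
        rw [Finset.sum_image (by intro a _ b _ h; exact Nat.add_right_cancel h)]
        push_cast
        exact Finset.sum_congr rfl fun x _ => by ring
      rw [h1, show Finset.Icc 1 n = insert 1 (Finset.Icc 2 n) by ext x; simp [Finset.mem_Icc]; omega,
        Finset.sum_insert (by simp)]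
      simp
    rw [hdecomp]
    have : ∑ u ∈ Finset.Ico 1 n, ((u:ℝ)+1)^γ ≤ (n:ℝ)^(γ+1)/(γ+1) := by
      refine key.trans ?_
      rw [hint]
      have : (0:ℝ) ≤ 1^(γ+1) := by positivity
      rw [div_le_div_iff₀ hγ1 hγ1]
      nlinarith
    have h1n : (1:ℝ) ≤ (n:ℝ)^(γ+1) := hn1
    calc 1 + ∑ u ∈ Finset.Ico 1 n, ((u:ℝ)+1)^γ ≤ (n:ℝ)^(γ+1) + (n:ℝ)^(γ+1)/(γ+1) := by linarith
      _ = (1 + 1/(γ+1)) * (n:ℝ)^(γ+1) := by field_simp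

def comps (s n : ℕ) : Finset (Fin s → ℕ) :=
  (Fintype.piFinset fun _ : Fin s => Finset.Icc 1 n).filter (fun u => ∑ i, u i = n)

lemma mem_comps {s n : ℕ} {u : Fin s → ℕ} :
    u ∈ comps s n ↔ (∀ i, 1 ≤ u i) ∧ ∑ i, u i = n := by
  simp only [comps, Finset.mem_filter, Fintype.mem_piFinset, Finset.mem_Icc]
  constructor
  · rintro ⟨h1, h2⟩; exact ⟨fun i => (h1 i).1, h2⟩
  · rintro ⟨h1, h2⟩
    refine ⟨fun i => ⟨h1 i, ?_⟩, h2⟩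
    rw [← h2]
    exact Finset.single_le_sum (f := u) (fun j _ => Nat.zero_le _) (Finset.mem_univ i)

lemma comps_zero_succ {t : ℕ} (ht : t ≠ 0) : comps 0 t = ∅ := by
  ext u; simp [mem_comps, ht.symm]

lemma comps_zero : comps 0 0 = {fun i => i.elim0} := by
  ext u
  simp only [mem_comps, Finset.mem_singleton]
  constructor
  · intro _; funext i; exact i.elim0
  · intro h; exact ⟨fun i => i.elim0, by simp⟩

lemma decomp (s : ℕ) (f : ℕ → ℝ) (g : Fin s → ℕ → ℝ) (n : ℕ) :
    ∑ u ∈ comps (s+1) n, f (u 0) * ∏ i, g i (u i.succ)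
      = ∑ k ∈ Finset.Icc 1 n, f k * ∑ v ∈ comps s (n - k), ∏ i, g i (v i) := by
  rw [← Finset.sum_fiberwise_of_maps_to (g := fun u : Fin (s+1) → ℕ => u 0)
      (t := Finset.Icc 1 n) ?mapsto]
  case mapsto =>
    intro u hu
    rw [mem_comps] at hu
    rw [Finset.mem_Icc]
    refine ⟨hu.1 0, ?_⟩
    rw [← hu.2]
    exact Finset.single_le_sum (f := u) (fun j _ => Nat.zero_le _) (Finset.mem_univ 0)
  refine Finset.sum_congr rfl fun k hk => ?_
  rw [Finset.mem_Icc] at hk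
  rw [Finset.mul_sum]
  refine Finset.sum_nbij' (i := fun u => u ∘ Fin.succ) (j := fun v => Fin.cons k v)
    ?_ ?_ ?_ ?_ ?_
  · intro u hu
    simp only [Finset.mem_filter, mem_comps] at hu
    obtain ⟨⟨h1, h2⟩, h3⟩ := hu
    rw [mem_comps]
    refine ⟨fun i => h1 i.succ, ?_⟩
    have := Fin.sum_univ_succ u
    simp only [Function.comp]
    omega
  · intro v hv
    rw [mem_comps] at hv
    simp only [Finset.mem_filter, mem_comps]
    have hsum : ∑ i, Fin.cons (α := fun _ => ℕ) k v i = k + ∑ i, v i := by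
      rw [Fin.sum_univ_succ]; simp
    refine ⟨⟨fun i => ?_, ?_⟩, by simp⟩
    · cases i using Fin.cases with
      | zero => simpa using hk.1
      | succ j => simpa using hv.1 j
    · rw [hsum, hv.2]; omega
  · intro u hu
    simp only [Finset.mem_filter] at hu
    funext i
    cases i using Fin.cases with
    | zero => simp [hu.2]
    | succ j => simp
  · intro v hv; funext i; simp
  · intro u hu
    simp only [Finset.mem_filter] at hu
    rw [hu.2]
    rfl

lemma rpow_mid {x y e : ℝ} (hx : 0 < x) (h1 : x/2 ≤ y) (h2 : y ≤ x) :
    y^e ≤ 2^|e| * x^e := by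
  have hy : 0 < y := by linarith
  rcases le_or_gt 0 e with he | he
  · rw [abs_of_nonneg he]
    calc y^e ≤ x^e := Real.rpow_le_rpow hy.le h2 he
      _ ≤ 2^e * x^e := by
        nlinarith [Real.one_le_rpow (by norm_num : (1:ℝ) ≤ 2) he, Real.rpow_nonneg (le_of_lt hx) e]
  · rw [abs_of_neg he]
    calc y^e ≤ (x/2)^e := Real.rpow_le_rpow_of_nonpos (by linarith) h1 he.le
      _ = 2^(-e) * x^e := by
        rw [Real.div_rpow hx.le (by norm_num), Real.rpow_neg (by norm_num)]
        field_simp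
  
lemma conv_bound (a b : ℝ) (ha : a ∈ Set.Ioo (0:ℝ) 1) (hb : -1 < b) :
    ∃ C > 0, ∀ n : ℕ, 1 ≤ n →
      ∑ k ∈ Finset.Icc 1 (n-1), (k:ℝ)^(-a) * ((n-k:ℕ):ℝ)^b ≤ C * (n:ℝ)^(1-a+b) := by
  obtain ⟨C1, hC1, hC1'⟩ := sum_rpow_le (-a) (by linarith [ha.2])
  obtain ⟨C2, hC2, hC2'⟩ := sum_rpow_le b hb
  refine ⟨2^|b| * C1 + 2^a * C2, by positivity, fun n hn => ?_⟩
  have hnpos : (0:ℝ) < n := by exact_mod_cast hn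
  rw [← Finset.sum_filter_add_sum_filter_not (Finset.Icc 1 (n-1)) (fun k => 2*k ≤ n)]
  have castsub : ∀ k ∈ Finset.Icc 1 (n-1), ((n-k:ℕ):ℝ) = (n:ℝ) - (k:ℝ) := by
    intro k hk
    rw [Finset.mem_Icc] at hk
    have : k ≤ n := by omega
    exact Nat.cast_sub this
  have partA : ∑ k ∈ (Finset.Icc 1 (n-1)).filter (fun k => 2*k ≤ n),
      (k:ℝ)^(-a) * ((n-k:ℕ):ℝ)^b ≤ 2^|b| * C1 * (n:ℝ)^(1-a+b) := by
    calc ∑ k ∈ (Finset.Icc 1 (n-1)).filter (fun k => 2*k ≤ n), (k:ℝ)^(-a) * ((n-k:ℕ):ℝ)^b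
        ≤ ∑ k ∈ (Finset.Icc 1 (n-1)).filter (fun k => 2*k ≤ n), (k:ℝ)^(-a) * (2^|b| * (n:ℝ)^b) := by
          refine Finset.sum_le_sum fun k hk => ?_
          rw [Finset.mem_filter] at hk
          have hcast := castsub k hk.1
          rw [Finset.mem_Icc] at hk
          refine mul_le_mul_of_nonneg_left ?_ (by positivity)
          rw [hcast]
          refine rpow_mid hnpos ?_ ?_
          · have : 2*(k:ℝ) ≤ n := by exact_mod_cast hk.2
            linarith
          · have : (1:ℝ) ≤ k := by exact_mod_cast hk.1.1
            linarith
      _ ≤ ∑ k ∈ Finset.Icc 1 n, (k:ℝ)^(-a) * (2^|b| * (n:ℝ)^b) := by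
          refine Finset.sum_le_sum_of_subset_of_nonneg ?_ (fun k _ _ => by positivity)
          refine (Finset.filter_subset _ _).trans ?_
          exact Finset.Icc_subset_Icc_right (by omega)
      _ = (2^|b| * (n:ℝ)^b) * ∑ k ∈ Finset.Icc 1 n, (k:ℝ)^(-a) := by
          rw [← Finset.sum_mul]; ring
      _ ≤ (2^|b| * (n:ℝ)^b) * (C1 * (n:ℝ)^(-a+1)) := by
          refine mul_le_mul_of_nonneg_left (hC1' n hn) (by positivity)
      _ = 2^|b| * C1 * (n:ℝ)^(1-a+b) := by
          have h : (n:ℝ)^((1:ℝ)-a+b) = (n:ℝ)^b * (n:ℝ)^(-a+1) := by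
            rw [← Real.rpow_add hnpos]; congr 1; ring
          rw [h]; ring
  have partB : ∑ k ∈ (Finset.Icc 1 (n-1)).filter (fun k => ¬ 2*k ≤ n),
      (k:ℝ)^(-a) * ((n-k:ℕ):ℝ)^b ≤ 2^a * C2 * (n:ℝ)^(1-a+b) := by
    calc ∑ k ∈ (Finset.Icc 1 (n-1)).filter (fun k => ¬ 2*k ≤ n), (k:ℝ)^(-a) * ((n-k:ℕ):ℝ)^b
        ≤ ∑ k ∈ (Finset.Icc 1 (n-1)).filter (fun k => ¬ 2*k ≤ n),
            (2^a * (n:ℝ)^(-a)) * ((n-k:ℕ):ℝ)^b := by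
          refine Finset.sum_le_sum fun k hk => ?_
          rw [Finset.mem_filter] at hk
          have hk1 := hk.1
          rw [Finset.mem_Icc] at hk1
          refine mul_le_mul_of_nonneg_right ?_ (by positivity)
          have := rpow_mid (e := -a) hnpos (x := (n:ℝ)) (y := (k:ℝ)) ?_ ?_
          · rwa [abs_of_neg (by linarith [ha.1] : -a < 0), neg_neg] at this
          · have : n < 2*k := by omega
            have : (n:ℝ) < 2*k := by exact_mod_cast this
            linarith
          · have : k ≤ n := by omega
            exact_mod_cast this
      _ = (2^a * (n:ℝ)^(-a)) * ∑ k ∈ (Finset.Icc 1 (n-1)).filter (fun k => ¬ 2*k ≤ n),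
            ((n-k:ℕ):ℝ)^b := by rw [← Finset.mul_sum]
      _ ≤ (2^a * (n:ℝ)^(-a)) * (C2 * (n:ℝ)^(b+1)) := by
          refine mul_le_mul_of_nonneg_left ?_ (by positivity)
          have step1 : ∑ k ∈ (Finset.Icc 1 (n-1)).filter (fun k => ¬ 2*k ≤ n), ((n-k:ℕ):ℝ)^b
              ≤ ∑ k ∈ Finset.Icc 1 (n-1), ((n-k:ℕ):ℝ)^b :=
            Finset.sum_le_sum_of_subset_of_nonneg (Finset.filter_subset _ _)
              (fun k _ _ => by positivity)
          have step2 : ∑ k ∈ Finset.Icc 1 (n-1), ((n-k:ℕ):ℝ)^b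
              = ∑ v ∈ Finset.Icc 1 (n-1), (v:ℝ)^b := by
            refine Finset.sum_nbij' (i := fun k => n - k) (j := fun v => n - v) ?_ ?_ ?_ ?_ ?_
            · intro k hk; simp only [Finset.mem_Icc] at hk ⊢; omega
            · intro v hv; simp only [Finset.mem_Icc] at hv ⊢; omega
            · intro k hk; simp only [Finset.mem_Icc] at hk; show n - (n - k) = k; omega
            · intro v hv; simp only [Finset.mem_Icc] at hv; show n - (n - v) = v; omega
            · intro k _; rfl
          have step3 : ∑ v ∈ Finset.Icc 1 (n-1), (v:ℝ)^b ≤ C2 * (n:ℝ)^(b+1) := by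
            have h : ∑ v ∈ Finset.Icc 1 (n-1), (v:ℝ)^b ≤ ∑ v ∈ Finset.Icc 1 n, (v:ℝ)^b :=
              Finset.sum_le_sum_of_subset_of_nonneg
                (Finset.Icc_subset_Icc_right (Nat.sub_le n 1)) (fun v _ _ => by positivity)
            exact h.trans (hC2' n hn)
          linarith
      _ = 2^a * C2 * (n:ℝ)^(1-a+b) := by
          have h : (n:ℝ)^((1:ℝ)-a+b) = (n:ℝ)^(-a) * (n:ℝ)^(b+1) := by
            rw [← Real.rpow_add hnpos]; congr 1; ring
          rw [h]; ring
  linarith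



lemma comps_zero_of_pos {s : ℕ} (hs : 0 < s) : comps s 0 = ∅ := by
  ext u
  simp only [mem_comps, Finset.notMem_empty, iff_false, not_and]
  intro h1 h2
  have h3 := Finset.single_le_sum (f := u) (fun j _ => Nat.zero_le _)
    (Finset.mem_univ (⟨0, hs⟩ : Fin s))
  have h4 := h1 ⟨0, hs⟩
  omega

lemma sum_comps_one (f : ℕ → ℝ) (n : ℕ) (hn : 1 ≤ n) :
    ∑ u ∈ comps 1 n, f (u 0) = f n := by
  have h := decomp 0 f (fun _ _ => 1) n
  simp only [Finset.prod_empty, Finset.univ_eq_empty, mul_one] at h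
  rw [h]
  have : ∀ k ∈ Finset.Icc 1 n, f k * ∑ v ∈ comps 0 (n - k), (1:ℝ)
      = if k = n then f n else 0 := by
    intro k hk
    rw [Finset.mem_Icc] at hk
    rcases eq_or_ne k n with rfl | hne
    · simp [Nat.sub_self, comps_zero]
    · have : n - k ≠ 0 := by omega
      simp [comps_zero_succ this, hne]
  rw [Finset.sum_congr rfl this, Finset.sum_ite_eq' (Finset.Icc 1 n) n (fun _ => f n),
    if_pos (Finset.mem_Icc.mpr ⟨hn, le_refl n⟩)]

lemma U_nonneg (s n : ℕ) (α : Fin s → ℝ) :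
    0 ≤ ∑ u ∈ comps s n, ∏ i, (u i : ℝ)^(-(α i)) :=
  Finset.sum_nonneg fun u _ => Finset.prod_nonneg fun i _ =>
    Real.rpow_nonneg (Nat.cast_nonneg _) _

lemma U_bound : ∀ (s : ℕ) (α : Fin s → ℝ), (∀ i, α i ∈ Set.Ioo (0:ℝ) 1) →
    ∃ C > 0, ∀ n : ℕ, 1 ≤ n →
      ∑ u ∈ comps s n, ∏ i, (u i : ℝ)^(-(α i)) ≤ C * (n:ℝ)^((s:ℝ)-1-∑ i, α i) := by
  intro s
  induction s with
  | zero =>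
    intro α hα
    refine ⟨1, one_pos, fun n hn => ?_⟩
    rw [comps_zero_succ (by omega)]
    simp
    positivity
  | succ s IH =>
    intro α hα
    rcases Nat.eq_zero_or_pos s with rfl | hs
    · refine ⟨1, one_pos, fun n hn => ?_⟩
      have h1 : ∑ u ∈ comps 1 n, ∏ i, (u i : ℝ)^(-(α i))
          = ∑ u ∈ comps 1 n, ((u 0 : ℝ))^(-(α 0)) := by
        refine Finset.sum_congr rfl fun u _ => ?_
        rw [Fin.prod_univ_one]
      rw [h1, sum_comps_one (fun k => (k:ℝ)^(-(α 0))) n hn]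
      have : ((1:ℕ):ℝ) - 1 - ∑ i : Fin 1, α i = -(α 0) := by
        rw [Fin.sum_univ_one]; push_cast; ring
      rw [this, one_mul]
    · set α' : Fin s → ℝ := fun i => α i.succ with hα'
      obtain ⟨C', hC', hC'bd⟩ := IH α' (fun i => hα i.succ)
      have hb : -1 < (s:ℝ) - 1 - ∑ i, α' i := by
        have hlt : ∑ i, α' i < ∑ i : Fin s, (1:ℝ) := by
          refine Finset.sum_lt_sum_of_nonempty ?_ (fun i _ => (hα i.succ).2)
          haveI : Nonempty (Fin s) := ⟨⟨0, hs⟩⟩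
          exact Finset.univ_nonempty
        simp only [Finset.sum_const, Finset.card_univ, Fintype.card_fin, nsmul_eq_mul,
          mul_one] at hlt
        linarith
      obtain ⟨Cc, hCc, hCcbd⟩ := conv_bound (α 0) ((s:ℝ) - 1 - ∑ i, α' i) (hα 0) hb
      refine ⟨C' * Cc, by positivity, fun n hn => ?_⟩
      have hdec : ∑ u ∈ comps (s+1) n, ∏ i, (u i : ℝ)^(-(α i))
          = ∑ k ∈ Finset.Icc 1 n, (k:ℝ)^(-(α 0)) *
              ∑ v ∈ comps s (n - k), ∏ i, (v i : ℝ)^(-(α' i)) := by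
        rw [← decomp s (fun k => (k:ℝ)^(-(α 0))) (fun i t => (t:ℝ)^(-(α' i))) n]
        refine Finset.sum_congr rfl fun u _ => ?_
        rw [Fin.prod_univ_succ]
      rw [hdec]
      obtain ⟨m, rfl⟩ : ∃ m, n = m + 1 := ⟨n - 1, by omega⟩
      rw [Finset.sum_Icc_succ_top (by omega : 1 ≤ m + 1)]
      have hlast : ((m+1:ℕ):ℝ)^(-(α 0)) *
          ∑ v ∈ comps s (m + 1 - (m+1)), ∏ i, (v i : ℝ)^(-(α' i)) = 0 := by
        rw [Nat.sub_self, comps_zero_of_pos hs]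
        simp
      rw [hlast, add_zero]
      have hstep : ∀ k ∈ Finset.Icc 1 m, (k:ℝ)^(-(α 0)) *
          ∑ v ∈ comps s (m + 1 - k), ∏ i, (v i : ℝ)^(-(α' i))
          ≤ C' * ((k:ℝ)^(-(α 0)) * ((m + 1 - k:ℕ):ℝ)^((s:ℝ) - 1 - ∑ i, α' i)) := by
        intro k hk
        rw [Finset.mem_Icc] at hk
        have h1 : 1 ≤ m + 1 - k := by omega
        have := hC'bd (m + 1 - k) h1
        calc (k:ℝ)^(-(α 0)) * ∑ v ∈ comps s (m + 1 - k), ∏ i, (v i : ℝ)^(-(α' i))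
            ≤ (k:ℝ)^(-(α 0)) * (C' * ((m + 1 - k:ℕ):ℝ)^((s:ℝ) - 1 - ∑ i, α' i)) :=
              mul_le_mul_of_nonneg_left this (by positivity)
          _ = C' * ((k:ℝ)^(-(α 0)) * ((m + 1 - k:ℕ):ℝ)^((s:ℝ) - 1 - ∑ i, α' i)) := by ring
      calc ∑ k ∈ Finset.Icc 1 m, (k:ℝ)^(-(α 0)) *
            ∑ v ∈ comps s (m + 1 - k), ∏ i, (v i : ℝ)^(-(α' i))
          ≤ ∑ k ∈ Finset.Icc 1 m, C' * ((k:ℝ)^(-(α 0)) *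
              ((m + 1 - k:ℕ):ℝ)^((s:ℝ) - 1 - ∑ i, α' i)) := Finset.sum_le_sum hstep
        _ = C' * ∑ k ∈ Finset.Icc 1 (m + 1 - 1), (k:ℝ)^(-(α 0)) *
              ((m + 1 - k:ℕ):ℝ)^((s:ℝ) - 1 - ∑ i, α' i) := by
            rw [← Finset.mul_sum]; norm_num
        _ ≤ C' * (Cc * ((m+1:ℕ):ℝ)^(1 - α 0 + ((s:ℝ) - 1 - ∑ i, α' i))) := by
            refine mul_le_mul_of_nonneg_left (hCcbd (m+1) (by omega)) hC'.le
        _ = C' * Cc * ((m+1:ℕ):ℝ)^(((s+1:ℕ):ℝ) - 1 - ∑ i : Fin (s+1), α i) := by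
            have hexp : 1 - α 0 + ((s:ℝ) - 1 - ∑ i, α' i)
                = ((s+1:ℕ):ℝ) - 1 - ∑ i : Fin (s+1), α i := by
              rw [Fin.sum_univ_succ]
              push_cast
              simp only [hα']
              ring
            rw [hexp]; ring

/-- For `s ≥ 1`, `(α₁,…,α_s) ∈ (0,1)^s` and `ε : ℕ → ℝ₊` tending to `0`, there is
`ε' : ℕ → ℝ₊` tending to `0` such that for all `n ≥ 1`, the sum of `ε(u₁)·∏ u_i^{−α_i}`
over all `s`-tuples `(u₁,…,u_s)` of positive integers with `u₁ + ⋯ + u_s = n` is at most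
`ε'(n)·n^{s−1−∑ α_i}`. -/



theorem stmt_17 (s : ℕ) (hs : 1 ≤ s) (α : Fin s → ℝ) (hα : ∀ i, α i ∈ Set.Ioo (0:ℝ) 1)
    (ε : ℕ → ℝ) (hε0 : ∀ n, 0 ≤ ε n) (hε : Tendsto ε atTop (𝓝 0)) :
    ∃ ε' : ℕ → ℝ, (∀ n, 0 ≤ ε' n) ∧ Tendsto ε' atTop (𝓝 0) ∧
      ∀ n : ℕ, 1 ≤ n →
        ∑ u ∈ (Fintype.piFinset fun _ : Fin s => Finset.Icc 1 n).filter
            (fun u => ∑ i, u i = n),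
          ε (u ⟨0, hs⟩) * ∏ i, (u i : ℝ) ^ (-(α i)) ≤
          ε' n * (n : ℝ) ^ ((s : ℝ) - 1 - ∑ i, α i) := by
  obtain ⟨m, rfl⟩ : ∃ m, s = m + 1 := ⟨s - 1, by omega⟩
  have hzero : (⟨0, hs⟩ : Fin (m+1)) = 0 := rfl
  set E : ℝ := ((m+1 : ℕ) : ℝ) - 1 - ∑ i, α i with hE
  set W : ℕ → ℝ := fun n =>
    ∑ u ∈ comps (m+1) n, ε (u 0) * ∏ i, (u i : ℝ)^(-(α i)) with hW
  have hWnonneg : ∀ n, 0 ≤ W n := fun n =>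
    Finset.sum_nonneg fun u _ => mul_nonneg (hε0 _)
      (Finset.prod_nonneg fun i _ => Real.rpow_nonneg (Nat.cast_nonneg _) _)
  refine ⟨fun n => W n / (n:ℝ)^E, fun n => div_nonneg (hWnonneg n)
    (Real.rpow_nonneg (Nat.cast_nonneg _) _), ?_, ?_⟩
  swap
  · -- the inequality
    intro n hn
    have hnpos : (0:ℝ) < (n:ℝ) := by exact_mod_cast hn
    have hEpos : (0:ℝ) < (n:ℝ)^E := Real.rpow_pos_of_pos hnpos E
    have : W n / (n:ℝ)^E * (n:ℝ)^E = W n := div_mul_cancel₀ _ hEpos.ne'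
    rw [this]
    apply le_of_eq
    refine Finset.sum_congr rfl fun u _ => by rw [hzero]
  -- the tendsto
  have key : ∀ η : ℝ, 0 < η → ∀ᶠ n : ℕ in atTop, W n / (n:ℝ)^E ≤ η := by
    intro η hη
    -- global bound M on ε
    obtain ⟨N₀, hN₀⟩ := Metric.tendsto_atTop.mp hε 1 one_pos
    set M : ℝ := 1 + ∑ k ∈ Finset.range N₀, ε k with hM
    have hMpos : 0 < M := by
      have : 0 ≤ ∑ k ∈ Finset.range N₀, ε k := Finset.sum_nonneg fun k _ => hε0 k
      linarith
    have hMbd : ∀ u, ε u ≤ M := by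
      intro u
      rcases lt_or_ge u N₀ with h | h
      · have h1 : ε u ≤ ∑ k ∈ Finset.range N₀, ε k :=
          Finset.single_le_sum (fun k _ => hε0 k) (Finset.mem_range.mpr h)
        linarith
      · have h2 := hN₀ u h
        rw [Real.dist_eq, sub_zero, abs_of_nonneg (hε0 u)] at h2
        have h3 : 0 ≤ ∑ k ∈ Finset.range N₀, ε k := Finset.sum_nonneg fun k _ => hε0 k
        linarith
    obtain ⟨Cf, hCf, hCfbd⟩ := U_bound (m+1) α hα
    obtain ⟨N₁, hN₁⟩ := Metric.tendsto_atTop.mp hε (η/(2*Cf)) (by positivity)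
    have hN₁' : ∀ u, N₁ ≤ u → ε u ≤ η/(2*Cf) := by
      intro u hu
      have := hN₁ u hu
      rw [Real.dist_eq, sub_zero, abs_of_nonneg (hε0 u)] at this
      linarith
    set α' : Fin m → ℝ := fun i => α i.succ with hα'
    obtain ⟨C', hC', hC'bd⟩ := U_bound m α' (fun i => hα i.succ)
    set e : ℝ := (m:ℝ) - 1 - ∑ i, α' i with he
    set B : ℝ := N₁ * M * C' * 2^|e| with hB
    have hBnn : 0 ≤ B := by positivity
    have hα0 := hα 0
    -- eventually B * n^(α0-1) ≤ η/2
    have htend : Tendsto (fun n : ℕ => B * (n:ℝ)^(α 0 - 1)) atTop (𝓝 (B * 0)) := by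
      refine Tendsto.const_mul B ?_
      have h1 : Tendsto (fun x : ℝ => x ^ (-(1 - α 0))) atTop (𝓝 0) :=
        tendsto_rpow_neg_atTop (by linarith [hα0.2])
      have := h1.comp (tendsto_natCast_atTop_atTop (R := ℝ))
      simpa [Function.comp_def, show -(1 - α 0) = α 0 - 1 by ring] using this
    rw [mul_zero] at htend
    obtain ⟨N₂, hN₂⟩ := Metric.tendsto_atTop.mp htend (η/2) (by positivity)
    have hN₂' : ∀ n : ℕ, N₂ ≤ n → B * (n:ℝ)^(α 0 - 1) ≤ η/2 := by
      intro n hn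
      have := hN₂ n hn
      rw [Real.dist_eq, sub_zero] at this
      calc B * (n:ℝ)^(α 0 - 1) ≤ |B * (n:ℝ)^(α 0 - 1)| := le_abs_self _
        _ ≤ η/2 := this.le
    filter_upwards [eventually_ge_atTop (2*N₁ + 2), eventually_ge_atTop N₂] with n hn1 hn2
    have hn : 1 ≤ n := by omega
    have hnpos : (0:ℝ) < (n:ℝ) := by exact_mod_cast hn
    have hEpos : (0:ℝ) < (n:ℝ)^E := Real.rpow_pos_of_pos hnpos E
    rw [div_le_iff₀ hEpos]
    -- decompose W n
    set T : ℕ → ℝ := fun t => ∑ v ∈ comps m t, ∏ i, (v i : ℝ)^(-(α' i)) with hT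
    have hTnn : ∀ t, 0 ≤ T t := fun t => U_nonneg m t α'
    have hdec : W n = ∑ k ∈ Finset.Icc 1 n, (ε k * (k:ℝ)^(-(α 0))) * T (n - k) := by
      rw [hW]
      rw [← decomp m (fun k => ε k * (k:ℝ)^(-(α 0))) (fun i t => (t:ℝ)^(-(α' i))) n]
      refine Finset.sum_congr rfl fun u _ => ?_
      rw [Fin.prod_univ_succ]
      simp only [hα']
      ring
    have hdecU : ∑ k ∈ Finset.Icc 1 n, (k:ℝ)^(-(α 0)) * T (n - k)
        = ∑ u ∈ comps (m+1) n, ∏ i, (u i : ℝ)^(-(α i)) := by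
      rw [← decomp m (fun k => (k:ℝ)^(-(α 0))) (fun i t => (t:ℝ)^(-(α' i))) n]
      refine Finset.sum_congr rfl fun u _ => ?_
      rw [Fin.prod_univ_succ]
    rw [hdec, ← Finset.sum_filter_add_sum_filter_not (Finset.Icc 1 n) (fun k => k ≤ N₁)]
    have hS1 : ∑ k ∈ (Finset.Icc 1 n).filter (fun k => k ≤ N₁),
        (ε k * (k:ℝ)^(-(α 0))) * T (n - k) ≤ (η/2) * (n:ℝ)^E := by
      have hterm : ∀ k ∈ (Finset.Icc 1 n).filter (fun k => k ≤ N₁),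
          (ε k * (k:ℝ)^(-(α 0))) * T (n - k) ≤ M * C' * 2^|e| * (n:ℝ)^e := by
        intro k hk
        rw [Finset.mem_filter, Finset.mem_Icc] at hk
        obtain ⟨⟨hk1, hkn⟩, hkN⟩ := hk
        have hnk1 : 1 ≤ n - k := by omega
        have h2 : (k:ℝ)^(-(α 0)) ≤ 1 :=
          Real.rpow_le_one_of_one_le_of_nonpos (by exact_mod_cast hk1) (by linarith [hα0.1])
        have h3 : T (n - k) ≤ C' * ((n-k:ℕ):ℝ)^e := hC'bd (n-k) hnk1
        have h4 : ((n-k:ℕ):ℝ)^e ≤ 2^|e| * (n:ℝ)^e := by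
          have hc : ((n-k:ℕ):ℝ) = (n:ℝ) - (k:ℝ) := by
            exact Nat.cast_sub (by omega : k ≤ n)
          rw [hc]
          refine rpow_mid hnpos ?_ ?_
          · have : (k:ℝ) ≤ N₁ := by exact_mod_cast hkN
            have : (2*N₁ + 2 : ℝ) ≤ n := by exact_mod_cast hn1
            linarith
          · have : (0:ℝ) < k := by exact_mod_cast hk1
            linarith
        have h5 : T (n-k) ≤ C' * (2^|e| * (n:ℝ)^e) := by
          refine h3.trans ?_
          refine mul_le_mul_of_nonneg_left ?_ hC'.le
          exact h4
        calc (ε k * (k:ℝ)^(-(α 0))) * T (n - k)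
            ≤ (M * 1) * (C' * (2^|e| * (n:ℝ)^e)) := by
              refine mul_le_mul ?_ h5 (hTnn _) (by positivity)
              exact mul_le_mul (hMbd k) h2 (Real.rpow_nonneg (Nat.cast_nonneg _) _) hMpos.le
          _ = M * C' * 2^|e| * (n:ℝ)^e := by ring
      have hcard : ((Finset.Icc 1 n).filter (fun k => k ≤ N₁)).card ≤ N₁ := by
        have hsub : (Finset.Icc 1 n).filter (fun k => k ≤ N₁) ⊆ Finset.Icc 1 N₁ := by
          intro k hk
          rw [Finset.mem_filter, Finset.mem_Icc] at hk
          rw [Finset.mem_Icc]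
          exact ⟨hk.1.1, hk.2⟩
        calc ((Finset.Icc 1 n).filter (fun k => k ≤ N₁)).card ≤ (Finset.Icc 1 N₁).card :=
              Finset.card_le_card hsub
          _ = N₁ := by rw [Nat.card_Icc]; omega
      calc ∑ k ∈ (Finset.Icc 1 n).filter (fun k => k ≤ N₁), (ε k * (k:ℝ)^(-(α 0))) * T (n - k)
          ≤ ((Finset.Icc 1 n).filter (fun k => k ≤ N₁)).card • (M * C' * 2^|e| * (n:ℝ)^e) :=
            Finset.sum_le_card_nsmul _ _ _ hterm
        _ ≤ N₁ • (M * C' * 2^|e| * (n:ℝ)^e) := by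
            refine nsmul_le_nsmul_left (by positivity) hcard
        _ = B * (n:ℝ)^e := by rw [nsmul_eq_mul, hB]; ring
        _ = (B * (n:ℝ)^(α 0 - 1)) * (n:ℝ)^E := by
            have hne : (n:ℝ)^e = (n:ℝ)^(α 0 - 1) * (n:ℝ)^E := by
              rw [← Real.rpow_add hnpos]
              congr 1
              rw [hE, he]
              simp only [hα', Fin.sum_univ_succ]
              push_cast
              ring
            rw [hne]; ring
        _ ≤ (η/2) * (n:ℝ)^E := by
            refine mul_le_mul_of_nonneg_right (hN₂' n hn2) hEpos.le
    have hS2 : ∑ k ∈ (Finset.Icc 1 n).filter (fun k => ¬ k ≤ N₁),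
        (ε k * (k:ℝ)^(-(α 0))) * T (n - k) ≤ (η/2) * (n:ℝ)^E := by
      have hterm : ∀ k ∈ (Finset.Icc 1 n).filter (fun k => ¬ k ≤ N₁),
          (ε k * (k:ℝ)^(-(α 0))) * T (n - k)
            ≤ (η/(2*Cf)) * ((k:ℝ)^(-(α 0)) * T (n - k)) := by
        intro k hk
        rw [Finset.mem_filter] at hk
        have hke : ε k ≤ η/(2*Cf) := hN₁' k (by omega)
        have : (ε k * (k:ℝ)^(-(α 0))) * T (n - k)
            = ε k * ((k:ℝ)^(-(α 0)) * T (n - k)) := by ring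
        rw [this]
        refine mul_le_mul_of_nonneg_right hke ?_
        exact mul_nonneg (Real.rpow_nonneg (Nat.cast_nonneg _) _) (hTnn _)
      calc ∑ k ∈ (Finset.Icc 1 n).filter (fun k => ¬ k ≤ N₁),
            (ε k * (k:ℝ)^(-(α 0))) * T (n - k)
          ≤ ∑ k ∈ (Finset.Icc 1 n).filter (fun k => ¬ k ≤ N₁),
            (η/(2*Cf)) * ((k:ℝ)^(-(α 0)) * T (n - k)) := Finset.sum_le_sum hterm
        _ ≤ ∑ k ∈ Finset.Icc 1 n, (η/(2*Cf)) * ((k:ℝ)^(-(α 0)) * T (n - k)) := by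
            refine Finset.sum_le_sum_of_subset_of_nonneg (Finset.filter_subset _ _) ?_
            intro k _ _
            have := hTnn (n - k)
            have := Real.rpow_nonneg (Nat.cast_nonneg (α := ℝ) k) (-(α 0))
            positivity
        _ = (η/(2*Cf)) * ∑ k ∈ Finset.Icc 1 n, (k:ℝ)^(-(α 0)) * T (n - k) := by
            rw [Finset.mul_sum]
        _ = (η/(2*Cf)) * ∑ u ∈ comps (m+1) n, ∏ i, (u i : ℝ)^(-(α i)) := by rw [hdecU]
        _ ≤ (η/(2*Cf)) * (Cf * (n:ℝ)^E) := by
            refine mul_le_mul_of_nonneg_left ?_ (by positivity)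
            exact hCfbd n hn
        _ = (η/2) * (n:ℝ)^E := by
            field_simp
    linarith
  rw [NormedAddCommGroup.tendsto_nhds_zero]
  intro η hη
  filter_upwards [key (η/2) (by positivity)] with n hn
  have h0 : 0 ≤ W n / (n:ℝ)^E := div_nonneg (hWnonneg n) (Real.rpow_nonneg (Nat.cast_nonneg _) _)
  rw [Real.norm_eq_abs, abs_of_nonneg h0]
  linarith
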